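/- Let X_1, X_2 be i.i.d. with density α x^{-α-1}·1{x ≥ 1} and a_n^α = n^γ log n with γ > 0. Then P(X_1 X_2 > a_n) is asymptotically γ/n^γ as n → ∞. -/

import Mathlib

open MeasureTheory Filter Real Set

noncomputable def paretoMeasure (α : ℝ) : Measure ℝ :=
  MeasureTheory.volume.withDensity
    (fun x => ENNReal.ofReal (if 1 ≤ x then α * x ^ (-α - 1) else 0))

noncomputable def aSeq (α γ : ℝ) (n : ℕ) : ℝ := ((n : ℝ) ^ γ * Real.log n) ^ (1/α)

instance (α : ℝ) : SFinite (paretoMeasure α) := by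
  unfold paretoMeasure; infer_instance

lemma pareto_meas (α : ℝ) :
    Measurable (fun x : ℝ => ENNReal.ofReal (if 1 ≤ x then α * x ^ (-α - 1) else 0)) := by
  apply Measurable.ennreal_ofReal
  exact Measurable.ite measurableSet_Ici (by fun_prop) measurable_const

lemma pareto_zero_Iio (α : ℝ) : paretoMeasure α (Iio 1) = 0 := by
  rw [paretoMeasure, withDensity_apply _ measurableSet_Iio]
  rw [setLIntegral_congr_fun (g := fun _ => 0) measurableSet_Iio]
  · simp
  · intro x (hx : x < 1)
    dsimp only
    rw [if_neg (not_le.mpr hx)]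
    simp

lemma pareto_ae_ge (α : ℝ) : ∀ᵐ x ∂(paretoMeasure α), 1 ≤ x := by
  rw [ae_iff]
  have : {x : ℝ | ¬ 1 ≤ x} = Iio 1 := by ext x; simp
  rw [this]
  exact pareto_zero_Iio α

lemma pareto_singleton (α : ℝ) (c : ℝ) : paretoMeasure α {c} = 0 :=
  (withDensity_absolutelyContinuous _ _) (Real.volume_singleton)

lemma pareto_tail (α : ℝ) (hα : 0 < α) {t : ℝ} (ht : 1 ≤ t) :
    paretoMeasure α (Ioi t) = ENNReal.ofReal (t ^ (-α)) := by
  have ht0 : (0:ℝ) < t := by linarith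
  rw [paretoMeasure, withDensity_apply _ measurableSet_Ioi]
  have h1 : ∫⁻ x in Ioi t, ENNReal.ofReal (if 1 ≤ x then α * x ^ (-α - 1) else 0)
      = ∫⁻ x in Ioi t, ENNReal.ofReal (α * x ^ (-α - 1)) := by
    apply setLIntegral_congr_fun measurableSet_Ioi
    intro x (hx : t < x)
    dsimp only
    rw [if_pos (by exact le_trans ht (le_of_lt hx))]
  have hint : IntegrableOn (fun x : ℝ => α * x ^ (-α - 1)) (Ioi t) := by
    exact (integrableOn_Ioi_rpow_of_lt (by linarith) ht0).const_mul α
  have hnn : 0 ≤ᵐ[volume.restrict (Ioi t)] fun x : ℝ => α * x ^ (-α - 1) := by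
    filter_upwards [ae_restrict_mem measurableSet_Ioi] with x hx
    have : (0:ℝ) < x := lt_trans ht0 hx
    positivity
  rw [h1, ← ofReal_integral_eq_lintegral_ofReal hint hnn, integral_const_mul,
    integral_Ioi_rpow_of_lt (by linarith) ht0]
  congr 1
  have : -α - 1 + 1 = -α := by ring
  rw [this]
  field_simp

lemma pareto_tail_lt (α : ℝ) (hα : 0 < α) {t : ℝ} (ht : t < 1) :
    paretoMeasure α (Ioi t) = 1 := by
  have h1 : Ioi t = Ioo t 1 ∪ Ici 1 := (Ioo_union_Ici_eq_Ioi ht).symm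
  have h2 : paretoMeasure α (Ioo t 1) = 0 :=
    measure_mono_null Ioo_subset_Iio_self (pareto_zero_Iio α)
  have h3 : Ici (1:ℝ) = {1} ∪ Ioi 1 := by
    rw [Set.union_comm, Set.Ioi_union_left]
  have key : paretoMeasure α (Ioi t) = paretoMeasure α (Ioi 1) := by
    apply le_antisymm
    · calc paretoMeasure α (Ioi t) = paretoMeasure α (Ioo t 1 ∪ Ici 1) := by rw [← h1]
        _ ≤ paretoMeasure α (Ioo t 1) + paretoMeasure α (Ici 1) := measure_union_le _ _
        _ = paretoMeasure α (Ici 1) := by rw [h2, zero_add]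
        _ = paretoMeasure α ({1} ∪ Ioi 1) := by rw [← h3]
        _ ≤ paretoMeasure α {1} + paretoMeasure α (Ioi 1) := measure_union_le _ _
        _ = paretoMeasure α (Ioi 1) := by rw [pareto_singleton, zero_add]
    · exact measure_mono (Ioi_subset_Ioi ht.le)
  rw [key, pareto_tail α hα le_rfl]
  simp

lemma pareto_prod_eq (α : ℝ) (hα : 0 < α) {a : ℝ} (ha : 1 ≤ a) :
    ((paretoMeasure α).prod (paretoMeasure α)) {p : ℝ × ℝ | p.1 * p.2 > a}
      = ENNReal.ofReal (a ^ (-α) * (α * Real.log a + 1)) := by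
  have ha0 : (0:ℝ) < a := by linarith
  have hs : MeasurableSet {p : ℝ × ℝ | p.1 * p.2 > a} :=
    measurableSet_lt measurable_const (measurable_fst.mul measurable_snd)
  rw [Measure.prod_apply hs]
  set g : ℝ → ENNReal := fun x => if x ≤ a then ENNReal.ofReal ((a / x) ^ (-α)) else 1 with hg
  have hgmeas : Measurable g :=
    Measurable.ite measurableSet_Iic (by fun_prop) measurable_const
  have hslice : ∫⁻ x, paretoMeasure α (Prod.mk x ⁻¹' {p : ℝ × ℝ | p.1 * p.2 > a})
      ∂(paretoMeasure α) = ∫⁻ x, g x ∂(paretoMeasure α) := by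
    apply lintegral_congr_ae
    filter_upwards [pareto_ae_ge α] with x hx
    have hx0 : (0:ℝ) < x := by linarith
    have hpre : Prod.mk x ⁻¹' {p : ℝ × ℝ | p.1 * p.2 > a} = Ioi (a / x) := by
      ext y
      simp only [mem_preimage, mem_setOf_eq, mem_Ioi, gt_iff_lt]
      rw [div_lt_iff₀ hx0, mul_comm]
    rw [hpre]
    show _ = if x ≤ a then ENNReal.ofReal ((a / x) ^ (-α)) else 1
    by_cases hxa : x ≤ a
    · rw [if_pos hxa, pareto_tail α hα ((one_le_div hx0).mpr hxa)]
    · rw [if_neg hxa, pareto_tail_lt α hα ((div_lt_one hx0).mpr (not_le.mp hxa))]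
  rw [hslice]
  rw [paretoMeasure, lintegral_withDensity_eq_lintegral_mul volume (pareto_meas α) hgmeas]
  set h : ℝ → ℝ := fun x => α * x ^ (-α - 1) * (if x ≤ a then (a / x) ^ (-α) else 1) with hh
  have hpt : ∀ x : ℝ,
      ((fun x => ENNReal.ofReal (if 1 ≤ x then α * x ^ (-α - 1) else 0)) * g) x
        = (Ici 1).indicator (fun x => ENNReal.ofReal (h x)) x := by
    intro x
    by_cases hx1 : 1 ≤ x
    · have hx0 : (0:ℝ) < x := by linarith
      rw [indicator_of_mem (show x ∈ Ici 1 from hx1), Pi.mul_apply]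
      show ENNReal.ofReal (if 1 ≤ x then α * x ^ (-α - 1) else 0) * (if x ≤ a then ENNReal.ofReal ((a / x) ^ (-α)) else 1) = ENNReal.ofReal (α * x ^ (-α - 1) * (if x ≤ a then (a / x) ^ (-α) else 1))
      rw [if_pos hx1]
      by_cases hxa : x ≤ a
      · rw [if_pos hxa, if_pos hxa, ← ENNReal.ofReal_mul (by positivity)]
      · rw [if_neg hxa, if_neg hxa, mul_one, mul_one]
    · rw [indicator_of_notMem (show x ∉ Ici 1 from hx1), Pi.mul_apply]
      show ENNReal.ofReal (if 1 ≤ x then α * x ^ (-α - 1) else 0) * _ = 0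
      rw [if_neg hx1, ENNReal.ofReal_zero, zero_mul]
  rw [lintegral_congr hpt, lintegral_indicator measurableSet_Ici]
  have hIoiIci : ∫⁻ x in Ici (1:ℝ), ENNReal.ofReal (h x)
      = ∫⁻ x in Ioi (1:ℝ), ENNReal.ofReal (h x) :=
    (setLIntegral_congr (Ioi_ae_eq_Ici (a := (1:ℝ)))).symm
  rw [hIoiIci, ← Ioc_union_Ioi_eq_Ioi ha,
    lintegral_union measurableSet_Ioi (Ioc_disjoint_Ioi le_rfl)]
  -- piece 1
  have hp1 : ∫⁻ x in Ioc (1:ℝ) a, ENNReal.ofReal (h x)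
      = ENNReal.ofReal (α * a ^ (-α) * Real.log a) := by
    have hcongr : ∫⁻ x in Ioc (1:ℝ) a, ENNReal.ofReal (h x)
        = ∫⁻ x in Ioc (1:ℝ) a, ENNReal.ofReal (α * a ^ (-α) * x⁻¹) := by
      apply setLIntegral_congr_fun measurableSet_Ioc
      intro x hx
      have hx0 : (0:ℝ) < x := lt_trans one_pos hx.1
      have e1 : (a / x) ^ (-α) = a ^ (-α) / x ^ (-α) := Real.div_rpow ha0.le hx0.le (-α)
      have e2 : x ^ (-α - 1) = x ^ (-α) * x⁻¹ := by
        rw [show -α - 1 = -α + (-1) by ring, Real.rpow_add hx0, Real.rpow_neg_one]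
      have hxne : x ^ (-α) ≠ 0 := by positivity
      rw [hh]
      simp only [if_pos hx.2]
      rw [e1, e2]
      congr 1
      field_simp
    have hint : IntegrableOn (fun x : ℝ => α * a ^ (-α) * x⁻¹) (Ioc 1 a) := by
      apply IntegrableOn.mono_set _ Ioc_subset_Icc_self
      apply ContinuousOn.integrableOn_Icc
      apply ContinuousOn.mul continuousOn_const
      apply ContinuousOn.inv₀ continuousOn_id
      intro x hx
      have : (0:ℝ) < x := lt_of_lt_of_le one_pos hx.1
      exact ne_of_gt this
    have hnn : 0 ≤ᵐ[volume.restrict (Ioc (1:ℝ) a)] fun x : ℝ => α * a ^ (-α) * x⁻¹ := by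
      filter_upwards [ae_restrict_mem measurableSet_Ioc] with x hx
      have hx0 : (0:ℝ) < x := lt_trans one_pos hx.1
      positivity
    rw [hcongr, ← ofReal_integral_eq_lintegral_ofReal hint hnn, integral_const_mul,
      ← intervalIntegral.integral_of_le ha, integral_inv_of_pos one_pos ha0, div_one]
  -- piece 2
  have hp2 : ∫⁻ x in Ioi a, ENNReal.ofReal (h x) = ENNReal.ofReal (a ^ (-α)) := by
    have hcongr : ∫⁻ x in Ioi a, ENNReal.ofReal (h x)
        = ∫⁻ x in Ioi a, ENNReal.ofReal (α * x ^ (-α - 1)) := by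
      apply setLIntegral_congr_fun measurableSet_Ioi
      intro x (hx : a < x)
      rw [hh]
      simp only [if_neg (not_le.mpr hx), mul_one]
    have hint : IntegrableOn (fun x : ℝ => α * x ^ (-α - 1)) (Ioi a) :=
      (integrableOn_Ioi_rpow_of_lt (by linarith) ha0).const_mul α
    have hnn : 0 ≤ᵐ[volume.restrict (Ioi a)] fun x : ℝ => α * x ^ (-α - 1) := by
      filter_upwards [ae_restrict_mem measurableSet_Ioi] with x hx
      have : (0:ℝ) < x := lt_trans ha0 hx
      positivity
    rw [hcongr, ← ofReal_integral_eq_lintegral_ofReal hint hnn, integral_const_mul,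
      integral_Ioi_rpow_of_lt (by linarith) ha0]
    congr 1
    rw [show -α - 1 + 1 = -α by ring]
    field_simp
  rw [hp1, hp2, ← ENNReal.ofReal_add (mul_nonneg (by positivity) (Real.log_nonneg ha)) (by positivity)]
  congr 1
  ring

lemma limit_aux (γ : ℝ) :
    Tendsto (fun n : ℕ => γ + (Real.log (Real.log n) + 1) / Real.log n) atTop (nhds γ) := by
  have hlogn : Tendsto (fun n : ℕ => Real.log n) atTop atTop :=
    Real.tendsto_log_atTop.comp tendsto_natCast_atTop_atTop
  have h1 : Tendsto (fun n : ℕ => Real.log (Real.log n) / Real.log n) atTop (nhds 0) := by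
    have := (Real.isLittleO_log_id_atTop.tendsto_div_nhds_zero).comp hlogn
    exact this
  have h2 : Tendsto (fun n : ℕ => 1 / Real.log n) atTop (nhds 0) := by
    simp only [one_div]; exact hlogn.inv_tendsto_atTop
  have h3 : Tendsto (fun n : ℕ => (Real.log (Real.log n) + 1) / Real.log n) atTop (nhds 0) := by
    have := h1.add h2
    rw [add_zero] at this
    apply this.congr
    intro n
    rw [add_div]
  simpa using tendsto_const_nhds.add h3

theorem stmt5 (α γ : ℝ) (hα : 0 < α) (hγ : 0 < γ) :
    Tendsto (fun n : ℕ =>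
      (n : ℝ) ^ γ *
        (((paretoMeasure α).prod (paretoMeasure α))
          {p : ℝ × ℝ | p.1 * p.2 > aSeq α γ n}).toReal) atTop (nhds γ) := by
  have hN : ∀ᶠ n : ℕ in atTop,
      (γ + (Real.log (Real.log n) + 1) / Real.log n)
        = (n : ℝ) ^ γ *
          (((paretoMeasure α).prod (paretoMeasure α))
            {p : ℝ × ℝ | p.1 * p.2 > aSeq α γ n}).toReal := by
    filter_upwards [eventually_ge_atTop 3] with n hn
    have hn3 : (3:ℝ) ≤ (n:ℝ) := by exact_mod_cast hn
    have hn1 : (1:ℝ) ≤ (n:ℝ) := by linarith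
    have hn0 : (0:ℝ) < (n:ℝ) := by linarith
    have hlog1 : 1 ≤ Real.log n := by
      rw [Real.le_log_iff_exp_le hn0]
      calc Real.exp 1 ≤ 2.7182818286 := Real.exp_one_lt_d9.le
        _ ≤ 3 := by norm_num
        _ ≤ (n:ℝ) := hn3
    have hpow1 : (1:ℝ) ≤ (n:ℝ) ^ γ := Real.one_le_rpow hn1 hγ.le
    have hx1 : (1:ℝ) ≤ (n:ℝ) ^ γ * Real.log n := by nlinarith
    have hx0 : (0:ℝ) < (n:ℝ) ^ γ * Real.log n := by linarith
    have ha1 : 1 ≤ aSeq α γ n := Real.one_le_rpow hx1 (by positivity)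
    have ha0 : (0:ℝ) < aSeq α γ n := by linarith
    rw [pareto_prod_eq α hα ha1, ENNReal.toReal_ofReal
      (mul_nonneg (Real.rpow_nonneg ha0.le _)
        (by nlinarith [Real.log_nonneg ha1]))]
    have hAa : (aSeq α γ n) ^ (-α) = ((n:ℝ) ^ γ * Real.log n)⁻¹ := by
      rw [aSeq, ← Real.rpow_mul hx0.le, show (1/α) * (-α) = -1 by field_simp,
        Real.rpow_neg_one]
    have hLa : α * Real.log (aSeq α γ n) = γ * Real.log n + Real.log (Real.log n) := by
      rw [aSeq, Real.log_rpow hx0, Real.log_mul (by positivity) (by linarith),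
        Real.log_rpow hn0]
      field_simp
    rw [hAa, hLa]
    have hlogne : Real.log n ≠ 0 := by linarith
    have hpowne : (n:ℝ) ^ γ ≠ 0 := by positivity
    field_simp
    ring
  exact (limit_aux γ).congr' hN
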